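/- There exist two-qubit density matrices Υ^M, Υ^N (Choi states of channels) and a completely positive linear map Ξ̃ preserving the trace of all Choi states such that S(Ξ̃(Υ^M) ‖ Ξ̃(Υ^N)) = 1 > 1/2 = S(Υ^M ‖ Υ^N). Concretely, take Υ^M = (1/4)(|00⟩⟨00| + |01⟩⟨01| + 2|11⟩⟨11|), Υ^N = 𝕀/4, and Ξ̃(Q) = (𝕀/2) ⊗ 2⟨1|_A Q|1⟩_A; then Ξ̃(Υ^M) = (𝕀/2) ⊗ |1⟩⟨1|, Ξ̃(Υ^N) = 𝕀/4, and the stated relative entropy values hold. -/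

import Mathlib

open Matrix Kronecker
open scoped ComplexOrder

noncomputable section

/-- Base-2 matrix logarithm of a Hermitian matrix, via the spectral theorem
(with the convention `log 0 = 0`); `0` on non-Hermitian matrices. -/
def mlog2 {n : Type*} [Fintype n] [DecidableEq n] (A : Matrix n n ℂ) : Matrix n n ℂ :=
  if h : A.IsHermitian then
    (h.eigenvectorUnitary : Matrix n n ℂ) *
      Matrix.diagonal (fun i => (Real.logb 2 (h.eigenvalues i) : ℂ)) *
      (star h.eigenvectorUnitary : Matrix n n ℂ)
  else 0

/-- Quantum relative entropy `S(ρ‖σ) = Tr[ρ (log₂ ρ − log₂ σ)]`. -/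
def relEnt {n : Type*} [Fintype n] [DecidableEq n] (ρ σ : Matrix n n ℂ) : ℝ :=
  (Matrix.trace (ρ * (mlog2 ρ - mlog2 σ))).re

/-- Von Neumann entropy `H(ρ) = −Tr[ρ log₂ ρ]`. -/
def vnEnt {n : Type*} [Fintype n] [DecidableEq n] (ρ : Matrix n n ℂ) : ℝ :=
  -(Matrix.trace (ρ * mlog2 ρ)).re

/-- A density matrix: positive semidefinite with unit trace. -/
def IsDensity {n : Type*} [Fintype n] (ρ : Matrix n n ℂ) : Prop :=
  ρ.PosSemidef ∧ ρ.trace = 1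

/-- Partial trace over the second (B) factor. -/
def ptraceB {m n : Type*} [Fintype n] (M : Matrix (m × n) (m × n) ℂ) : Matrix m m ℂ :=
  Matrix.of fun i j => ∑ k, M (i, k) (j, k)

/-- Partial trace over the first (A) factor. -/
def ptraceA {m n : Type*} [Fintype m] (M : Matrix (m × n) (m × n) ℂ) : Matrix n n ℂ :=
  Matrix.of fun a b => ∑ k, M (k, a) (k, b)

/-- The Choi state `(id ⊗ M)(Φ)` of a map `M : M_d(ℂ) → M_{d'}(ℂ)`, where
`Φ = (1/d) ∑_{i,j} |ii⟩⟨jj|` is the maximally entangled state. -/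
def ChoiOf {d d' : ℕ} (M : Matrix (Fin d) (Fin d) ℂ → Matrix (Fin d') (Fin d') ℂ) :
    Matrix (Fin d × Fin d') (Fin d × Fin d') ℂ :=
  Matrix.of fun p q =>
    ((d : ℂ))⁻¹ * M (Matrix.single p.1 q.1 1) p.2 q.2

/-- Complete positivity of a linear map on matrices: every finite ancilla
extension `id_k ⊗ M` maps positive semidefinite matrices to positive
semidefinite matrices. -/
def IsCompletelyPositive {n m : Type*} [Fintype n] [DecidableEq n] [Fintype m] [DecidableEq m]
    (M : Matrix n n ℂ →ₗ[ℂ] Matrix m m ℂ) : Prop :=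
  ∀ (k : ℕ) (X : Matrix (Fin k × n) (Fin k × n) ℂ), X.PosSemidef →
    (Matrix.of fun (p q : Fin k × m) =>
      M (Matrix.of fun a b => X (p.1, a) (q.1, b)) p.2 q.2).PosSemidef

/-- The classical-quantum state `∑_x p_x |x⟩⟨x| ⊗ ρ_x`. -/
def cqState {ι m : Type*} [DecidableEq ι] (p : ι → ℝ) (ρ : ι → Matrix m m ℂ) :
    Matrix (ι × m) (ι × m) ℂ :=
  Matrix.of fun x y => if x.1 = y.1 then (p x.1 : ℂ) * ρ x.1 x.2 y.2 else 0

/-- The maximally entangled two-qubit state `Φ = (1/2) ∑_{i,j} |ii⟩⟨jj|`. -/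
def Phi2 : Matrix (Fin 2 × Fin 2) (Fin 2 × Fin 2) ℂ :=
  Matrix.of fun p q => if p.1 = p.2 ∧ q.1 = q.2 then (1 / 2 : ℂ) else 0

end


noncomputable section ChoiAux
namespace ChoiAux

open Matrix

variable {n : Type*} [Fintype n] [DecidableEq n]

lemma trace_mul_conj {A : Matrix n n ℂ} (h : A.IsHermitian) (g : n → ℂ) :
    Matrix.trace (A * ((h.eigenvectorUnitary : Matrix n n ℂ) * Matrix.diagonal g *
        (star h.eigenvectorUnitary : Matrix n n ℂ)))
      = ∑ i, (h.eigenvalues i : ℂ) * g i := by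
  set V := (h.eigenvectorUnitary : Matrix n n ℂ) with hVdef
  have h1 : star V * V = 1 := Unitary.coe_star_mul_self h.eigenvectorUnitary
  have key : A * (V * Matrix.diagonal g * star V)
      = V * (Matrix.diagonal (RCLike.ofReal ∘ h.eigenvalues) * Matrix.diagonal g) * star V := by
    conv_lhs => rw [show A = V * Matrix.diagonal (RCLike.ofReal ∘ h.eigenvalues) * star V from
      h.spectral_theorem]
    calc (V * Matrix.diagonal (RCLike.ofReal ∘ h.eigenvalues) * star V) *
          (V * Matrix.diagonal g * star V)
        = V * Matrix.diagonal (RCLike.ofReal ∘ h.eigenvalues) * (star V * V) *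
            Matrix.diagonal g * star V := by simp only [Matrix.mul_assoc]
      _ = _ := by rw [h1]; simp only [Matrix.mul_assoc, Matrix.one_mul]
  rw [key, Matrix.trace_mul_cycle, ← Matrix.mul_assoc, h1, Matrix.one_mul,
    Matrix.diagonal_mul_diagonal, Matrix.trace_diagonal]
  rfl

lemma trace_mul_mlog2_self {A : Matrix n n ℂ} (h : A.IsHermitian) :
    Matrix.trace (A * mlog2 A)
      = ∑ i, ((h.eigenvalues i : ℂ) * (Real.logb 2 (h.eigenvalues i) : ℂ)) := by
  rw [mlog2, dif_pos h]
  exact trace_mul_conj h _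

lemma trace_sq_eq {A : Matrix n n ℂ} (h : A.IsHermitian) :
    Matrix.trace (A * A) = ∑ i, ((h.eigenvalues i : ℂ)) ^ 2 := by
  have : A * A = A * ((h.eigenvectorUnitary : Matrix n n ℂ) *
      Matrix.diagonal (RCLike.ofReal ∘ h.eigenvalues) *
      (star h.eigenvectorUnitary : Matrix n n ℂ)) := congrArg (A * ·) h.spectral_theorem
  rw [this, trace_mul_conj h]
  simp [sq]

lemma trace_eq_sum_eig {A : Matrix n n ℂ} (h : A.IsHermitian) :
    Matrix.trace A = ∑ i, (h.eigenvalues i : ℂ) := by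
  conv_lhs => rw [show A = _ from h.spectral_theorem]
  rw [Unitary.conjStarAlgAut_apply, Matrix.trace_mul_cycle,
    Unitary.coe_star_mul_self h.eigenvectorUnitary, Matrix.one_mul, Matrix.trace_diagonal]
  rfl

lemma eig_mem (f : n → ℝ) (h : (Matrix.diagonal (fun i => (f i : ℂ))).IsHermitian) (i : n) :
    ∃ j, f j = h.eigenvalues i := by
  have h1 := h.eigenvalues_mem_spectrum_real i
  have h2 : ((h.eigenvalues i : ℝ) : ℂ) ∈ spectrum ℂ (Matrix.diagonal (fun i => (f i : ℂ))) := by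
    simpa using spectrum.algebraMap_mem ℂ h1
  rw [spectrum_diagonal] at h2
  obtain ⟨j, hj⟩ := h2
  exact ⟨j, Complex.ofReal_inj.mp (by simpa using hj)⟩

lemma isHermitian_diag_real (f : n → ℝ) :
    (Matrix.diagonal (fun i => (f i : ℂ))).IsHermitian :=
  Matrix.isHermitian_diagonal_of_self_adjoint _ <| funext fun i => by
    simp [Pi.star_apply, Complex.conj_ofReal]

lemma mlog2_real_smul_one (c : ℝ) :
    mlog2 (((c : ℂ)) • (1 : Matrix n n ℂ)) = ((Real.logb 2 c : ℂ)) • 1 := by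
  have hd : ((c : ℂ)) • (1 : Matrix n n ℂ) = Matrix.diagonal (fun _ : n => ((c : ℝ) : ℂ)) :=
    Matrix.smul_one_eq_diagonal _
  have h : (((c : ℂ)) • (1 : Matrix n n ℂ)).IsHermitian := by
    rw [hd]; exact isHermitian_diag_real _
  have heig : ∀ i, h.eigenvalues i = c := by
    intro i
    have h' : (Matrix.diagonal (fun _ : n => ((c : ℝ) : ℂ))).IsHermitian := hd ▸ h
    obtain ⟨j, hj⟩ := eig_mem (fun _ : n => c) h' i
    have : h'.eigenvalues i = h.eigenvalues i := by congr 1; exact hd.symm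
    rw [← this, ← hj]
  rw [mlog2, dif_pos h]
  have hdiag : Matrix.diagonal (fun i => (Real.logb 2 (h.eigenvalues i) : ℂ))
      = ((Real.logb 2 c : ℂ)) • 1 := by
    ext i j
    by_cases hij : i = j <;>
      simp [Matrix.diagonal_apply, Matrix.one_apply, hij, heig]
  rw [hdiag, Matrix.mul_smul, Matrix.smul_mul, Matrix.mul_one]
  congr 1
  exact (Matrix.mem_unitaryGroup_iff).mp h.eigenvectorUnitary.2

lemma relEnt_diag_smul_one (f : n → ℝ) (a b c : ℝ)
    (hf : ∀ j, f j * Real.logb 2 (f j) = a * (f j) ^ 2 + b * f j) :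
    relEnt (Matrix.diagonal fun i => (f i : ℂ)) (((c : ℂ)) • 1)
      = a * (∑ j, (f j) ^ 2) + b * (∑ j, f j) - Real.logb 2 c * (∑ j, f j) := by
  have h := isHermitian_diag_real f
  have hsum1 : ∑ i, h.eigenvalues i = ∑ j, f j := by
    have h1 := trace_eq_sum_eig h
    rw [Matrix.trace_diagonal] at h1
    exact_mod_cast h1.symm
  have hsum2 : ∑ i, (h.eigenvalues i) ^ 2 = ∑ j, (f j) ^ 2 := by
    have h1 := trace_sq_eq h
    rw [Matrix.diagonal_mul_diagonal, Matrix.trace_diagonal] at h1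
    have h2 : ∑ i, ((f i : ℂ)) ^ 2 = ∑ i, ((h.eigenvalues i : ℂ)) ^ 2 := by
      rw [← h1]; simp [sq]
    exact_mod_cast h2.symm
  unfold relEnt
  rw [mlog2_real_smul_one, Matrix.mul_sub, Matrix.trace_sub, Matrix.mul_smul,
    Matrix.mul_one, Matrix.trace_smul, trace_mul_mlog2_self h, Matrix.trace_diagonal]
  have e1 : (∑ i, ((h.eigenvalues i : ℂ) * (Real.logb 2 (h.eigenvalues i) : ℂ)))
      = ((a * (∑ j, (f j) ^ 2) + b * (∑ j, f j) : ℝ) : ℂ) := by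
    rw [← hsum1, ← hsum2]
    push_cast
    rw [Finset.mul_sum, Finset.mul_sum, ← Finset.sum_add_distrib]
    refine Finset.sum_congr rfl fun i _ => ?_
    obtain ⟨j, hj⟩ := eig_mem f h i
    rw [← hj]
    exact_mod_cast congrArg Complex.ofReal (hf j)
  have e2 : (∑ i, ((f i : ℂ))) = ((∑ j, f j : ℝ) : ℂ) := by push_cast; rfl
  rw [e1, e2, smul_eq_mul, ← Complex.ofReal_mul, ← Complex.ofReal_sub, Complex.ofReal_re]

lemma logb_half : Real.logb 2 ((2 : ℝ)⁻¹) = -1 := by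
  rw [Real.logb_inv, Real.logb_self_eq_one one_lt_two]

lemma logb_quarter : Real.logb 2 ((4 : ℝ)⁻¹) = -2 := by
  rw [Real.logb_inv, show (4 : ℝ) = 2 ^ (2 : ℕ) by norm_num, Real.logb_pow,
    Real.logb_self_eq_one one_lt_two]
  norm_num

lemma logb_half' : Real.logb 2 ((1 : ℝ) / 2) = -1 := by rw [one_div]; exact logb_half

lemma logb_quarter' : Real.logb 2 ((1 : ℝ) / 4) = -2 := by rw [one_div]; exact logb_quarter

/-- Diagonal of `Υ^M`. -/
def F : Fin 2 × Fin 2 → ℝ := fun p =>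
  if p = (0, 0) then 1 / 4 else if p = (0, 1) then 1 / 4 else if p = (1, 1) then 1 / 2 else 0

/-- Diagonal of `Ξ(Υ^M)`. -/
def G : Fin 2 × Fin 2 → ℝ := fun p => if p.2 = 1 then 1 / 2 else 0

/-- The superchannel's action on Choi states. -/
def XiMap : Matrix (Fin 2 × Fin 2) (Fin 2 × Fin 2) ℂ →ₗ[ℂ]
    Matrix (Fin 2 × Fin 2) (Fin 2 × Fin 2) ℂ where
  toFun Q := Matrix.of fun p q =>
    ((2 : ℂ)⁻¹ * (if p.1 = q.1 then 1 else 0)) * (2 * Q (1, p.2) (1, q.2))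
  map_add' Q R := by
    ext p q
    simp only [Matrix.of_apply, Matrix.add_apply]
    ring
  map_smul' c Q := by
    ext p q
    simp only [Matrix.of_apply, Matrix.smul_apply, RingHom.id_apply, smul_eq_mul]
    ring

lemma hXiM : XiMap (Matrix.diagonal fun p => (F p : ℂ))
    = Matrix.diagonal fun p => (G p : ℂ) := by
  ext ⟨i, a⟩ ⟨j, b⟩
  show ((2 : ℂ)⁻¹ * (if i = j then 1 else 0)) *
      (2 * (Matrix.diagonal fun p => (F p : ℂ)) (1, a) (1, b)) = _
  fin_cases i <;> fin_cases a <;> fin_cases j <;> fin_cases b <;>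
    norm_num [F, G, Matrix.diagonal_apply, Prod.ext_iff]

lemma hXiN : XiMap ((4 : ℂ)⁻¹ • 1)
    = (4 : ℂ)⁻¹ • (1 : Matrix (Fin 2 × Fin 2) (Fin 2 × Fin 2) ℂ) := by
  ext ⟨i, a⟩ ⟨j, b⟩
  show ((2 : ℂ)⁻¹ * (if i = j then 1 else 0)) *
      (2 * ((4 : ℂ)⁻¹ • (1 : Matrix (Fin 2 × Fin 2) (Fin 2 × Fin 2) ℂ)) (1, a) (1, b)) = _
  fin_cases i <;> fin_cases a <;> fin_cases j <;> fin_cases b <;>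
    norm_num [Matrix.smul_apply, Matrix.one_apply, Prod.ext_iff]

lemma XiCP : IsCompletelyPositive XiMap := by
  intro k X hX
  classical
  set B : Fin 2 → Matrix (Fin k × (Fin 2 × Fin 2)) (Fin k × (Fin 2 × Fin 2)) ℂ :=
    fun t => Matrix.of fun p r =>
      if r = (p.1, ((1 : Fin 2), p.2.2)) ∧ p.2.1 = t then 1 else 0 with hB
  have hBX : ∀ t p s, (B t * X) p s
      = if p.2.1 = t then X (p.1, (1, p.2.2)) s else 0 := by
    intro t p s
    rw [Matrix.mul_apply, Finset.sum_eq_single (p.1, ((1 : Fin 2), p.2.2))]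
    · by_cases h : p.2.1 = t <;> simp [hB, h]
    · intro r _ hr
      simp [hB, hr]
    · simp
  have hfull : ∀ t p q, (B t * X * (B t)ᴴ) p q
      = if p.2.1 = t ∧ q.2.1 = t then X (p.1, (1, p.2.2)) (q.1, (1, q.2.2)) else 0 := by
    intro t p q
    rw [Matrix.mul_apply, Finset.sum_eq_single (q.1, ((1 : Fin 2), q.2.2))]
    · rw [hBX, Matrix.conjTranspose_apply]
      by_cases h1 : p.2.1 = t <;> by_cases h2 : q.2.1 = t <;> simp [hB, h1, h2]
    · intro r _ hr
      rw [Matrix.conjTranspose_apply]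
      simp [hB, hr]
    · simp
  have hY : (Matrix.of fun (p q : Fin k × (Fin 2 × Fin 2)) =>
        XiMap (Matrix.of fun a b => X (p.1, a) (q.1, b)) p.2 q.2)
      = B 0 * X * (B 0)ᴴ + B 1 * X * (B 1)ᴴ := by
    ext p q
    show ((2 : ℂ)⁻¹ * (if p.2.1 = q.2.1 then 1 else 0)) *
        (2 * X (p.1, (1, p.2.2)) (q.1, (1, q.2.2)))
      = (B 0 * X * (B 0)ᴴ + B 1 * X * (B 1)ᴴ) p q
    rw [Matrix.add_apply, hfull, hfull]
    rcases p with ⟨i, a, c⟩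
    rcases q with ⟨j, a', c'⟩
    fin_cases a <;> fin_cases a' <;> norm_num <;> ring
  rw [hY]
  exact (hX.mul_mul_conjTranspose_same (B 0)).add (hX.mul_mul_conjTranspose_same (B 1))

lemma XiTP : ∀ Q : Matrix (Fin 2 × Fin 2) (Fin 2 × Fin 2) ℂ, IsDensity Q →
    ptraceB Q = (2 : ℂ)⁻¹ • (1 : Matrix (Fin 2) (Fin 2) ℂ) → (XiMap Q).trace = Q.trace := by
  intro Q hQ hpt
  have h11 : Q (1, 0) (1, 0) + Q (1, 1) (1, 1) = (2 : ℂ)⁻¹ := by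
    have h := congrFun (congrFun hpt 1) 1
    simpa [ptraceB, Matrix.smul_apply, Matrix.one_apply, Fin.sum_univ_two] using h
  rw [hQ.2]
  show ∑ p : Fin 2 × Fin 2, XiMap Q p p = 1
  show ∑ p : Fin 2 × Fin 2,
    ((2 : ℂ)⁻¹ * (if p.1 = p.1 then 1 else 0)) * (2 * Q (1, p.2) (1, p.2)) = 1
  rw [Fintype.sum_prod_type]
  simp only [eq_self_iff_true, if_true, Fin.sum_univ_two]
  linear_combination 2 * h11

lemma rel1 : relEnt (Matrix.diagonal fun p => (F p : ℂ))
    ((4 : ℂ)⁻¹ • (1 : Matrix (Fin 2 × Fin 2) (Fin 2 × Fin 2) ℂ)) = 1 / 2 := by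
  rw [show ((4 : ℂ)⁻¹ • (1 : Matrix (Fin 2 × Fin 2) (Fin 2 × Fin 2) ℂ)
      = (((4⁻¹ : ℝ) : ℂ)) • 1) by norm_num]
  rw [relEnt_diag_smul_one F 4 (-3) 4⁻¹ ?_]
  · norm_num [Fintype.sum_prod_type, Fin.sum_univ_two, F, Prod.ext_iff,
      logb_quarter, logb_quarter', logb_half']
  · intro j
    have : F j = 4⁻¹ ∨ F j = 2⁻¹ ∨ F j = 0 := by
      unfold F; split_ifs <;> norm_num
    rcases this with h | h | h <;>
      rw [h] <;>
      norm_num [logb_quarter, logb_half, logb_quarter', logb_half', Real.logb_zero]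

lemma rel2 : relEnt (XiMap (Matrix.diagonal fun p => (F p : ℂ)))
    (XiMap ((4 : ℂ)⁻¹ • (1 : Matrix (Fin 2 × Fin 2) (Fin 2 × Fin 2) ℂ))) = 1 := by
  rw [hXiM, hXiN]
  rw [show ((4 : ℂ)⁻¹ • (1 : Matrix (Fin 2 × Fin 2) (Fin 2 × Fin 2) ℂ)
      = (((4⁻¹ : ℝ) : ℂ)) • 1) by norm_num]
  rw [relEnt_diag_smul_one G 0 (-1) 4⁻¹ ?_]
  · norm_num [Fintype.sum_prod_type, Fin.sum_univ_two, G, logb_quarter,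
      logb_quarter', logb_half']
  · intro j
    have : G j = 2⁻¹ ∨ G j = 0 := by
      unfold G; split_ifs <;> norm_num
    rcases this with h | h <;>
      rw [h] <;>
      norm_num [logb_half, logb_half', Real.logb_zero]

end ChoiAux
end ChoiAux

/-- there exist two-qubit Choi states `Υ^M`, `Υ^N` and a completely
positive linear map `Ξ̃` preserving the trace of all Choi states with
`S(Ξ̃(Υ^M)‖Ξ̃(Υ^N)) = 1 > 1/2 = S(Υ^M‖Υ^N)`; concretely
`Υ^M = (1/4)(|00⟩⟨00| + |01⟩⟨01| + 2|11⟩⟨11|)`, `Υ^N = 𝕀/4`, and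
`Ξ̃(Q) = (𝕀/2) ⊗ 2⟨1|_A Q|1⟩_A`, with `Ξ̃(Υ^M) = (𝕀/2) ⊗ |1⟩⟨1|` and
`Ξ̃(Υ^N) = 𝕀/4`. -/
theorem choi_divergence_not_monotone :
    ∃ (ΥM ΥN : Matrix (Fin 2 × Fin 2) (Fin 2 × Fin 2) ℂ)
      (Ξ : Matrix (Fin 2 × Fin 2) (Fin 2 × Fin 2) ℂ →ₗ[ℂ]
            Matrix (Fin 2 × Fin 2) (Fin 2 × Fin 2) ℂ),
      IsDensity ΥM ∧ IsDensity ΥN ∧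
      ptraceB ΥM = (2 : ℂ)⁻¹ • (1 : Matrix (Fin 2) (Fin 2) ℂ) ∧
      ptraceB ΥN = (2 : ℂ)⁻¹ • (1 : Matrix (Fin 2) (Fin 2) ℂ) ∧
      IsCompletelyPositive Ξ ∧
      (∀ Q : Matrix (Fin 2 × Fin 2) (Fin 2 × Fin 2) ℂ, IsDensity Q →
        ptraceB Q = (2 : ℂ)⁻¹ • (1 : Matrix (Fin 2) (Fin 2) ℂ) →
          (Ξ Q).trace = Q.trace) ∧
      ΥM = (Matrix.of fun p q : Fin 2 × Fin 2 =>
        if p = q then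
          (if p = (0, 0) then (1 / 4 : ℂ) else
            if p = (0, 1) then 1 / 4 else if p = (1, 1) then 1 / 2 else 0)
        else 0) ∧
      ΥN = (4 : ℂ)⁻¹ • (1 : Matrix (Fin 2 × Fin 2) (Fin 2 × Fin 2) ℂ) ∧
      (∀ Q, Ξ Q = Matrix.of fun p q =>
        ((2 : ℂ)⁻¹ * (if p.1 = q.1 then 1 else 0)) * (2 * Q (1, p.2) (1, q.2))) ∧
      Ξ ΥM = (Matrix.of fun p q : Fin 2 × Fin 2 =>
        if p.1 = q.1 ∧ p.2 = 1 ∧ q.2 = 1 then (1 / 2 : ℂ) else 0) ∧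
      Ξ ΥN = (4 : ℂ)⁻¹ • (1 : Matrix (Fin 2 × Fin 2) (Fin 2 × Fin 2) ℂ) ∧
      relEnt ΥM ΥN = 1 / 2 ∧
      relEnt (Ξ ΥM) (Ξ ΥN) = 1 ∧
      relEnt ΥM ΥN < relEnt (Ξ ΥM) (Ξ ΥN) := by
  classical
  open ChoiAux in
  refine ⟨Matrix.diagonal (fun p => (F p : ℂ)), (4 : ℂ)⁻¹ • 1, XiMap,
    ?_, ?_, ?_, ?_, XiCP, XiTP, ?_, rfl, fun _ => rfl, ?_, hXiN, ?_, ?_, ?_⟩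
  case _ => -- IsDensity ΥM
    constructor
    · refine Matrix.posSemidef_diagonal_iff.mpr fun p => ?_
      refine Complex.zero_le_real.mpr ?_
      unfold ChoiAux.F
      split_ifs <;> norm_num
    · rw [Matrix.trace_diagonal]
      norm_num [Fintype.sum_prod_type, Fin.sum_univ_two, ChoiAux.F, Prod.ext_iff]
  case _ => -- IsDensity ΥN
    constructor
    · rw [Matrix.smul_one_eq_diagonal]
      refine Matrix.posSemidef_diagonal_iff.mpr fun p => ?_
      rw [show ((4 : ℂ)⁻¹ = ((4⁻¹ : ℝ) : ℂ)) by norm_num]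
      exact Complex.zero_le_real.mpr (by norm_num)
    · rw [Matrix.trace_smul, Matrix.trace_one]
      norm_num
  case _ => -- ptraceB ΥM
    ext i j
    show (∑ k : Fin 2, (Matrix.diagonal fun p => ((F p : ℂ))) (i, k) (j, k)) = _
    fin_cases i <;> fin_cases j <;>
      norm_num [Fin.sum_univ_two, Matrix.diagonal_apply, Matrix.smul_apply,
        Matrix.one_apply, ChoiAux.F, Prod.ext_iff]
  case _ => -- ptraceB ΥN
    ext i j
    show (∑ k : Fin 2, ((4 : ℂ)⁻¹ • (1 : Matrix (Fin 2 × Fin 2) (Fin 2 × Fin 2) ℂ))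
      (i, k) (j, k)) = _
    fin_cases i <;> fin_cases j <;>
      norm_num [Fin.sum_univ_two, Matrix.smul_apply, Matrix.one_apply, Prod.ext_iff]
  case _ => -- ΥM explicit form
    ext p q
    show (Matrix.diagonal fun p => ((F p : ℂ))) p q = _
    rcases p with ⟨i, a⟩
    rcases q with ⟨j, b⟩
    fin_cases i <;> fin_cases a <;> fin_cases j <;> fin_cases b <;>
      norm_num [Matrix.diagonal_apply, ChoiAux.F, Prod.ext_iff]
  case _ => -- Ξ ΥM explicit form
    rw [hXiM]
    ext p q
    rcases p with ⟨i, a⟩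
    rcases q with ⟨j, b⟩
    fin_cases i <;> fin_cases a <;> fin_cases j <;> fin_cases b <;>
      norm_num [Matrix.diagonal_apply, ChoiAux.G, Prod.ext_iff]
  case _ => exact rel1
  case _ => exact rel2
  case _ => -- strict inequality
    rw [rel1, rel2]
    norm_num
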